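/- Let γ ∈ (0,1), let T ≥ 1 be a natural number (the number of attributes), and set α = γ/T. Let F > 0 (the frequency of records whose attribute p takes value a). Let Q be a nonempty finite index set (the attributes q ≠ p), and for each q ∈ Q let k_q ≥ 1 and let f_{q,1}, …, f_{q,k_q} be positive reals with Σ_{b=1}^{k_q} f_{q,b} = F. On a probability space (Ω, ℙ), let (D_{q,b}) (for q ∈ Q, 1 ≤ b ≤ k_q) be a mutually independent family of random variables with D_{q,b} uniformly distributed on [0, 2·α·f_{q,b}]. Then for every τ with 0 < τ ≤ min_{q,b} 2·α·f_{q,b}, the column-wise attack confidence Conf_col := ℙ(∃ (q,b), D_{q,b} ≥ τ) satisfies Conf_col = 1 − ∏_{q∈Q} ∏_{b=1}^{k_q} τ/(2·α·f_{q,b}) ≤ 1 − ∏_{q∈Q} (τ·k_q/(2·α·F))^{k_q}, and consequently the confidence gain G := Conf_col/(α·F) over the random-flipping confidence Conf_rnd = α·F satisfies G ≤ (1 − ∏_{q∈Q} (τ·k_q/(2·α·F))^{k_q}) / (α·F). -/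

import Mathlib

open MeasureTheory ProbabilityTheory Finset

/-- Proposition 1 (column-wise correlation attack confidence): modeling the
deviations `D (q,b)` as independent uniform random variables on
`[0, 2·α·f q b]` with `α = γ/T`, `Σ_b f q b = F`, the attack confidence
`Conf_col = ℙ(∃ (q,b), D (q,b) ≥ τ)` equals `1 − ∏_q ∏_b τ/(2·α·f q b)`, is
bounded by `1 − ∏_q (τ·k_q/(2·α·F))^{k_q}` (AM–GM), and hence the confidence
gain `Conf_col/(α·F)` over the random-flipping confidence `α·F` is bounded by
`(1 − ∏_q (τ·k_q/(2·α·F))^{k_q})/(α·F)`. -/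
theorem column_wise_attack_confidence_gain
    {Ω : Type*} [MeasurableSpace Ω] (μ : Measure Ω) [IsProbabilityMeasure μ]
    (γ : ℝ) (hγ : γ ∈ Set.Ioo (0 : ℝ) 1)
    (T : ℕ) (hT : 1 ≤ T) (α : ℝ) (hα : α = γ / T)
    (F : ℝ) (hF : 0 < F)
    {ι : Type*} [Fintype ι] [Nonempty ι]
    (k : ι → ℕ) (hk : ∀ q, 1 ≤ k q)
    (f : (q : ι) → Fin (k q) → ℝ) (hf : ∀ q b, 0 < f q b)
    (hsum : ∀ q, ∑ b, f q b = F)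
    (D : (Σ q : ι, Fin (k q)) → Ω → ℝ)
    (hmeas : ∀ p, Measurable (D p))
    (hunif : ∀ p : Σ q : ι, Fin (k q), Measure.map (D p) μ
      = (ENNReal.ofReal (2 * α * f p.1 p.2))⁻¹
          • volume.restrict (Set.Icc 0 (2 * α * f p.1 p.2)))
    (hindep : iIndepFun D μ)
    (τ : ℝ) (hτ0 : 0 < τ) (hτ : ∀ p : Σ q : ι, Fin (k q), τ ≤ 2 * α * f p.1 p.2) :
    (μ {ω | ∃ p : Σ q : ι, Fin (k q), τ ≤ D p ω}).toReal
        = 1 - ∏ q, ∏ b, τ / (2 * α * f q b) ∧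
      (μ {ω | ∃ p : Σ q : ι, Fin (k q), τ ≤ D p ω}).toReal
        ≤ 1 - ∏ q : ι, (τ * k q / (2 * α * F)) ^ (k q) ∧
      (μ {ω | ∃ p : Σ q : ι, Fin (k q), τ ≤ D p ω}).toReal / (α * F)
        ≤ (1 - ∏ q : ι, (τ * k q / (2 * α * F)) ^ (k q)) / (α * F) := by
  obtain ⟨hγ0, hγ1⟩ := hγ
  have hT0 : (0 : ℝ) < T := by exact_mod_cast hT
  have hα0 : 0 < α := by rw [hα]; positivity
  have hc0 : ∀ p : Σ q : ι, Fin (k q), 0 < 2 * α * f p.1 p.2 := by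
    intro p; have := hf p.1 p.2; positivity
  -- measure of a single event
  have hsingle : ∀ p : Σ q : ι, Fin (k q),
      μ (D p ⁻¹' Set.Iio τ) = ENNReal.ofReal (τ / (2 * α * f p.1 p.2)) := by
    intro p
    rw [← Measure.map_apply (hmeas p) measurableSet_Iio, hunif p]
    rw [Measure.smul_apply, Measure.restrict_apply measurableSet_Iio]
    have hinter : Set.Iio τ ∩ Set.Icc 0 (2 * α * f p.1 p.2) = Set.Ico 0 τ := by
      ext x
      simp only [Set.mem_inter_iff, Set.mem_Iio, Set.mem_Icc, Set.mem_Ico]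
      constructor
      · rintro ⟨h1, h2, _⟩; exact ⟨h2, h1⟩
      · rintro ⟨h1, h2⟩; exact ⟨h2, h1, h2.le.trans (hτ p)⟩
    rw [hinter, Real.volume_Ico, sub_zero, smul_eq_mul,
      ENNReal.ofReal_div_of_pos (hc0 p), div_eq_mul_inv, mul_comm]
  -- the complement event
  set S : Set Ω := {ω | ∃ p : Σ q : ι, Fin (k q), τ ≤ D p ω} with hS
  have hScompl : Sᶜ = ⋂ p : Σ q : ι, Fin (k q), D p ⁻¹' Set.Iio τ := by
    ext ω
    simp only [hS, Set.mem_compl_iff, Set.mem_setOf_eq, not_exists, not_le,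
      Set.mem_iInter, Set.mem_preimage, Set.mem_Iio]
  have hSmeas : MeasurableSet S := by
    have : S = ⋃ p : Σ q : ι, Fin (k q), D p ⁻¹' Set.Ici τ := by
      ext ω; simp [hS]
    rw [this]
    exact MeasurableSet.iUnion fun p => hmeas p measurableSet_Ici
  have hcompl : μ Sᶜ
      = ENNReal.ofReal (∏ q, ∏ b, τ / (2 * α * f q b)) := by
    rw [hScompl, hindep.meas_iInter (fun p => ⟨Set.Iio τ, measurableSet_Iio, rfl⟩)]
    have h1 : ∀ p : Σ q : ι, Fin (k q), μ (D p ⁻¹' Set.Iio τ)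
        = ENNReal.ofReal (τ / (2 * α * f p.1 p.2)) := hsingle
    calc ∏ p : Σ q : ι, Fin (k q), μ (D p ⁻¹' Set.Iio τ)
        = ∏ p : Σ q : ι, Fin (k q), ENNReal.ofReal (τ / (2 * α * f p.1 p.2)) := by
          exact Finset.prod_congr rfl fun p _ => h1 p
      _ = ENNReal.ofReal (∏ p : Σ q : ι, Fin (k q), τ / (2 * α * f p.1 p.2)) := by
          rw [← ENNReal.ofReal_prod_of_nonneg]
          intro p _
          exact div_nonneg hτ0.le (hc0 p).le
      _ = ENNReal.ofReal (∏ q, ∏ b, τ / (2 * α * f q b)) := by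
          congr 1
          rw [← Finset.univ_sigma_univ, Finset.prod_sigma]
  have hP0 : 0 ≤ ∏ q, ∏ b, τ / (2 * α * f q b) :=
    Finset.prod_nonneg fun q _ => Finset.prod_nonneg fun b _ =>
      div_nonneg hτ0.le (hc0 ⟨q, b⟩).le
  have hP1 : ∏ q, ∏ b, τ / (2 * α * f q b) ≤ 1 := by
    apply Finset.prod_le_one (fun q _ => Finset.prod_nonneg fun b _ =>
      div_nonneg hτ0.le (hc0 ⟨q, b⟩).le)
    intro q _
    apply Finset.prod_le_one (fun b _ => div_nonneg hτ0.le (hc0 ⟨q, b⟩).le)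
    intro b _
    exact div_le_one_of_le₀ (hτ ⟨q, b⟩) (hc0 ⟨q, b⟩).le
  -- the equality
  have heq : (μ S).toReal = 1 - ∏ q, ∏ b, τ / (2 * α * f q b) := by
    have h2 : μ S = 1 - μ Sᶜ := by
      have h3 := prob_compl_eq_one_sub (μ := μ) hSmeas.compl
      rwa [compl_compl] at h3
    rw [h2, hcompl, ENNReal.toReal_sub_of_le _ ENNReal.one_ne_top]
    · rw [ENNReal.toReal_one, ENNReal.toReal_ofReal hP0]
    · rw [← ENNReal.ofReal_one]
      exact ENNReal.ofReal_le_ofReal hP1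
  refine ⟨heq, ?_, ?_⟩
  -- AM–GM bound per attribute q
  · have amgm : ∀ q : ι, (τ * k q / (2 * α * F)) ^ (k q) ≤ ∏ b, τ / (2 * α * f q b) := by
      intro q
      set n := k q with hn
      have hn0 : 0 < (n : ℝ) := by exact_mod_cast hk q
      -- AM–GM: geometric mean ≤ arithmetic mean
      have hgm : ∏ b, f q b ^ ((n : ℝ)⁻¹) ≤ F / n := by
        have := Real.geom_mean_le_arith_mean_weighted Finset.univ
          (fun _ : Fin n => (n : ℝ)⁻¹) (f q)
          (fun _ _ => by positivity)
          (by simp [Finset.card_univ, Fintype.card_fin, mul_inv_cancel₀ hn0.ne'])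
          (fun b _ => (hf q b).le)
        calc ∏ b, f q b ^ ((n : ℝ)⁻¹) ≤ ∑ b, (n : ℝ)⁻¹ * f q b := this
          _ = F / n := by rw [← Finset.mul_sum, hsum q, div_eq_inv_mul]
      have hprodf : ∏ b, f q b ≤ (F / n) ^ n := by
        have hkey : (∏ b, f q b ^ ((n : ℝ)⁻¹)) ^ n = ∏ b, f q b := by
          rw [← Finset.prod_pow]
          refine Finset.prod_congr rfl fun b _ => ?_
          rw [← Real.rpow_natCast (f q b ^ ((n : ℝ)⁻¹)) n,
            ← Real.rpow_mul (hf q b).le, inv_mul_cancel₀ hn0.ne', Real.rpow_one]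
        calc ∏ b, f q b = (∏ b, f q b ^ ((n : ℝ)⁻¹)) ^ n := hkey.symm
          _ ≤ (F / n) ^ n :=
            pow_le_pow_left₀ (Finset.prod_nonneg fun b _ =>
              Real.rpow_nonneg (hf q b).le _) hgm n
      have hprodpos : 0 < ∏ b, f q b := Finset.prod_pos fun b _ => hf q b
      have hrhs : ∏ b, τ / (2 * α * f q b)
          = τ ^ n / ((2 * α) ^ n * ∏ b, f q b) := by
        rw [Finset.prod_div_distrib, Finset.prod_const, Finset.card_univ,
          Fintype.card_fin]
        congr 1
        rw [Finset.prod_mul_distrib, Finset.prod_const, Finset.card_univ,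
          Fintype.card_fin]
      have hden : (2 * α) ^ n * ∏ b, f q b ≤ (2 * α * F / n) ^ n := by
        calc (2 * α) ^ n * ∏ b, f q b ≤ (2 * α) ^ n * (F / n) ^ n := by
              apply mul_le_mul_of_nonneg_left hprodf (by positivity)
          _ = (2 * α * F / n) ^ n := by rw [← mul_pow, mul_div_assoc]
      have hlhs : (τ * n / (2 * α * F)) ^ n = τ ^ n / (2 * α * F / n) ^ n := by
        rw [← div_pow]
        congr 1
        rw [div_div_eq_mul_div]
      rw [hrhs, hlhs]
      have hdenpos : 0 < (2 * α) ^ n * ∏ b, f q b := by positivity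
      exact div_le_div_of_nonneg_left (by positivity) hdenpos hden
    have hprodle : ∏ q : ι, (τ * k q / (2 * α * F)) ^ (k q)
        ≤ ∏ q, ∏ b, τ / (2 * α * f q b) :=
      Finset.prod_le_prod (fun q _ => by positivity) (fun q _ => amgm q)
    rw [heq]
    linarith
  -- divide by α·F
  · have hαF : 0 < α * F := by positivity
    have h2 : (μ S).toReal ≤ 1 - ∏ q : ι, (τ * k q / (2 * α * F)) ^ (k q) := by
      have amgm : ∀ q : ι, (τ * k q / (2 * α * F)) ^ (k q) ≤ ∏ b, τ / (2 * α * f q b) := by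
        intro q
        set n := k q with hn
        have hn0 : 0 < (n : ℝ) := by exact_mod_cast hk q
        have hgm : ∏ b, f q b ^ ((n : ℝ)⁻¹) ≤ F / n := by
          have := Real.geom_mean_le_arith_mean_weighted Finset.univ
            (fun _ : Fin n => (n : ℝ)⁻¹) (f q)
            (fun _ _ => by positivity)
            (by simp [Finset.card_univ, Fintype.card_fin, mul_inv_cancel₀ hn0.ne'])
            (fun b _ => (hf q b).le)
          calc ∏ b, f q b ^ ((n : ℝ)⁻¹) ≤ ∑ b, (n : ℝ)⁻¹ * f q b := this
            _ = F / n := by rw [← Finset.mul_sum, hsum q, div_eq_inv_mul]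
        have hprodf : ∏ b, f q b ≤ (F / n) ^ n := by
          have hkey : (∏ b, f q b ^ ((n : ℝ)⁻¹)) ^ n = ∏ b, f q b := by
            rw [← Finset.prod_pow]
            refine Finset.prod_congr rfl fun b _ => ?_
            rw [← Real.rpow_natCast (f q b ^ ((n : ℝ)⁻¹)) n,
              ← Real.rpow_mul (hf q b).le, inv_mul_cancel₀ hn0.ne', Real.rpow_one]
          calc ∏ b, f q b = (∏ b, f q b ^ ((n : ℝ)⁻¹)) ^ n := hkey.symm
            _ ≤ (F / n) ^ n :=
              pow_le_pow_left₀ (Finset.prod_nonneg fun b _ =>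
                Real.rpow_nonneg (hf q b).le _) hgm n
        have hprodpos : 0 < ∏ b, f q b := Finset.prod_pos fun b _ => hf q b
        have hrhs : ∏ b, τ / (2 * α * f q b)
            = τ ^ n / ((2 * α) ^ n * ∏ b, f q b) := by
          rw [Finset.prod_div_distrib, Finset.prod_const, Finset.card_univ,
            Fintype.card_fin]
          congr 1
          rw [Finset.prod_mul_distrib, Finset.prod_const, Finset.card_univ,
            Fintype.card_fin]
        have hden : (2 * α) ^ n * ∏ b, f q b ≤ (2 * α * F / n) ^ n := by
          calc (2 * α) ^ n * ∏ b, f q b ≤ (2 * α) ^ n * (F / n) ^ n := by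
                apply mul_le_mul_of_nonneg_left hprodf (by positivity)
            _ = (2 * α * F / n) ^ n := by rw [← mul_pow, mul_div_assoc]
        have hlhs : (τ * n / (2 * α * F)) ^ n = τ ^ n / (2 * α * F / n) ^ n := by
          rw [← div_pow]
          congr 1
          rw [div_div_eq_mul_div]
        rw [hrhs, hlhs]
        have hdenpos : 0 < (2 * α) ^ n * ∏ b, f q b := by positivity
        exact div_le_div_of_nonneg_left (by positivity) hdenpos hden
      have hprodle : ∏ q : ι, (τ * k q / (2 * α * F)) ^ (k q)
          ≤ ∏ q, ∏ b, τ / (2 * α * f q b) :=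
        Finset.prod_le_prod (fun q _ => by positivity) (fun q _ => amgm q)
      rw [heq]
      linarith
    gcongr
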